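/- Fix a positive integer k. For each integer n ≥ 3, let μ_n ∈ ℝ and σ_n > 0 be reals with μ_n/σ_n > √(2 ln n), let D₁⁽ⁿ⁾, …, D_{n−2}⁽ⁿ⁾ be independent, identically distributed real-valued random variables each with Gaussian law N(μ_n, σ_n²), and let δ_n be any real threshold with δ_n ≤ μ_n − σ_n·√(2 ln n). Then the probability that at most k−1 of the variables D₁⁽ⁿ⁾, …, D_{n−2}⁽ⁿ⁾ take a value ≤ δ_n tends to 1 as n → ∞. -/

import Mathlib

open MeasureTheory ProbabilityTheory Filter

section AuxGaussianTail

open Real Set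


lemma integrable_neg_mul_exp' : Integrable (fun x : ℝ => -x * Real.exp (-x^2/2)) := by
  apply Integrable.mono' (g := fun x : ℝ => Real.exp (-(1/4) * x^2))
    (integrable_exp_neg_mul_sq (by norm_num))
  · exact (measurable_neg.mul ((measurable_id.pow_const 2).neg.div_const 2).exp).aestronglyMeasurable
  · refine ae_of_all _ fun x => ?_
    rw [norm_mul, norm_neg, Real.norm_eq_abs, Real.norm_eq_abs,
      abs_of_nonneg (Real.exp_pos _).le]
    have h1 : |x| ≤ Real.exp (x^2/4) := by
      calc |x| ≤ x^2/4 + 1 := by nlinarith [sq_nonneg (|x| - 2), sq_abs x]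
        _ ≤ Real.exp (x^2/4) := Real.add_one_le_exp _
    calc |x| * Real.exp (-x^2/2) ≤ Real.exp (x^2/4) * Real.exp (-x^2/2) :=
          mul_le_mul_of_nonneg_right h1 (Real.exp_pos _).le
      _ = Real.exp (-(1/4) * x^2) := by rw [← Real.exp_add]; ring_nf

lemma integrable_exp_half' : Integrable (fun x : ℝ => Real.exp (-x^2/2)) := by
  have h := integrable_exp_neg_mul_sq (b := 1/2) (by norm_num)
  refine h.congr (ae_of_all _ fun x => ?_)
  ring_nf

lemma exp_sq_tendsto_atBot' : Tendsto (fun x : ℝ => Real.exp (-x^2/2)) atBot (nhds 0) := by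
  have h0 : Tendsto (fun x : ℝ => (-x)^2) atBot atTop :=
    (tendsto_pow_atTop two_ne_zero).comp tendsto_neg_atBot_atTop
  have h1 : Tendsto (fun x : ℝ => x^2) atBot atTop := h0.congr fun x => by ring
  have h2 : Tendsto (fun x : ℝ => x^2/2) atBot atTop := h1.atTop_div_const (by norm_num)
  have h3 : Tendsto (fun x : ℝ => -(x^2/2)) atBot atBot := tendsto_neg_atTop_atBot.comp h2
  have h4 : Tendsto (fun x : ℝ => -x^2/2) atBot atBot := h3.congr fun x => by ring
  exact Real.tendsto_exp_atBot.comp h4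

lemma hasDerivAt_exp_sq' (x : ℝ) :
    HasDerivAt (fun x : ℝ => Real.exp (-x^2/2)) (-x * Real.exp (-x^2/2)) x := by
  have h' : HasDerivAt (fun x : ℝ => -x^2/2) (-x) x := by
    have := ((hasDerivAt_pow 2 x).neg.div_const 2)
    convert this using 1
    · rfl
    · rfl
    · rfl
    · push_cast; ring
  have := (Real.hasDerivAt_exp (-x^2/2)).comp x h'
  simpa [Function.comp_def, mul_comm] using this

lemma mills' (t : ℝ) (ht : 0 < t) :
    ∫ x in Iic (-t), Real.exp (-x^2/2) ≤ Real.exp (-t^2/2) / t := by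
  have hFTC : ∫ x in Iic (-t), -x * Real.exp (-x^2/2) = Real.exp (-t^2/2) := by
    have h := integral_Iic_of_hasDerivAt_of_tendsto' (a := -t) (m := 0)
      (f := fun x => Real.exp (-x^2/2)) (f' := fun x => -x * Real.exp (-x^2/2))
      (fun x _ => hasDerivAt_exp_sq' x)
      integrable_neg_mul_exp'.integrableOn exp_sq_tendsto_atBot'
    rw [h, sub_zero]
    simp [neg_pow]
  have hmono : ∫ x in Iic (-t), Real.exp (-x^2/2)
      ≤ ∫ x in Iic (-t), (-x/t) * Real.exp (-x^2/2) := by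
    apply setIntegral_mono_on integrable_exp_half'.integrableOn
      ((integrable_neg_mul_exp'.div_const t).congr (ae_of_all _ fun x => by ring)).integrableOn
      measurableSet_Iic
    intro x hx
    have hx' : t ≤ -x := by
      have : x ≤ -t := hx
      linarith
    have h1 : (1:ℝ) ≤ -x/t := (one_le_div ht).2 hx'
    nlinarith [Real.exp_pos (-x^2/2)]
  calc ∫ x in Iic (-t), Real.exp (-x^2/2) ≤ ∫ x in Iic (-t), (-x/t) * Real.exp (-x^2/2) := hmono
    _ = (∫ x in Iic (-t), -x * Real.exp (-x^2/2)) / t := by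
        rw [← integral_div]; congr 1 with x; ring
    _ = Real.exp (-t^2/2) / t := by rw [hFTC]

lemma gaussianReal_affine (m s : ℝ) :
    gaussianReal m ⟨s^2, sq_nonneg _⟩
      = Measure.map (fun x => s * x + m) (gaussianReal 0 1) := by
  have h1 : Measure.map (fun x => s * x) (gaussianReal 0 1)
      = gaussianReal 0 ⟨s^2, sq_nonneg _⟩ := by
    rw [show (fun x => s * x) = (s * ·) from rfl, ProbabilityTheory.gaussianReal_map_const_mul s]
    norm_num
    rfl
  have h2 := ProbabilityTheory.gaussianReal_map_add_const (μ := 0) (v := ⟨s^2, sq_nonneg _⟩) m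
  rw [zero_add] at h2
  rw [← h2, ← h1, Measure.map_map (measurable_id'.add_const m) (measurable_id'.const_mul s)]
  rfl

lemma gauss_tail (m s t : ℝ) (hs : 0 < s) (ht : 0 < t) :
    gaussianReal m ⟨s^2, sq_nonneg _⟩ (Set.Iic (m - s*t))
      ≤ ENNReal.ofReal (Real.exp (-t^2/2) / (t * Real.sqrt (2*Real.pi))) := by
  rw [gaussianReal_affine m s,
    Measure.map_apply ((measurable_id'.const_mul s).add_const m) measurableSet_Iic]
  have hpre : (fun x => s * x + m) ⁻¹' Iic (m - s*t) = Iic (-t) := by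
    ext x
    simp only [mem_preimage, mem_Iic]
    constructor
    · intro h; nlinarith
    · intro h; nlinarith
  rw [hpre, ProbabilityTheory.gaussianReal_apply_eq_integral 0 one_ne_zero]
  apply ENNReal.ofReal_le_ofReal
  have hpdf : ∀ x : ℝ, ProbabilityTheory.gaussianPDFReal 0 1 x
      = (Real.sqrt (2*Real.pi))⁻¹ * Real.exp (-x^2/2) := by
    intro x
    simp [ProbabilityTheory.gaussianPDFReal]
  rw [show (∫ x in Iic (-t), ProbabilityTheory.gaussianPDFReal 0 1 x)
      = (Real.sqrt (2*Real.pi))⁻¹ * ∫ x in Iic (-t), Real.exp (-x^2/2) by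
    rw [← integral_const_mul]; exact setIntegral_congr_fun measurableSet_Iic fun x _ => hpdf x]
  have hsqrt : 0 < Real.sqrt (2*Real.pi) := Real.sqrt_pos.2 (by positivity)
  have := mills' t ht
  rw [div_eq_mul_inv, mul_inv, mul_comm t⁻¹]
  rw [← mul_assoc, mul_comm (Real.exp (-t^2/2))]
  rw [mul_assoc]
  apply mul_le_mul_of_nonneg_left _ (by positivity)
  rwa [← div_eq_mul_inv]

end AuxGaussianTail

open Set

/-- Fix a positive integer `k`. For each integer `n ≥ 3`, let `μ n`, `σ n > 0`
with `μ n / σ n > √(2 ln n)`, let `D n 1, …, D n (n-2)` be i.i.d. real random variables with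
Gaussian law `N(μ n, (σ n)²)`, and let `δ n ≤ μ n − σ n · √(2 ln n)`. Then the probability
that at most `k − 1` of the variables take a value `≤ δ n` tends to `1` as `n → ∞`. -/
theorem at_most_k_minus_one_below_threshold_tendsto_one
    (k : ℕ) (hk : 0 < k)
    (Ω : ℕ → Type) [∀ n, MeasurableSpace (Ω n)]
    (P : ∀ n, Measure (Ω n)) [∀ n, IsProbabilityMeasure (P n)]
    (μ σ δ : ℕ → ℝ)
    (D : ∀ n, Fin (n - 2) → Ω n → ℝ)
    (hσ : ∀ n : ℕ, 3 ≤ n → 0 < σ n)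
    (hratio : ∀ n : ℕ, 3 ≤ n → Real.sqrt (2 * Real.log n) < μ n / σ n)
    (hindep : ∀ n : ℕ, 3 ≤ n → iIndepFun (D n) (P n))
    (hdist : ∀ n : ℕ, 3 ≤ n → ∀ i,
      Measure.map (D n i) (P n) = gaussianReal (μ n) ⟨(σ n) ^ 2, sq_nonneg _⟩)
    (hδ : ∀ n : ℕ, 3 ≤ n → δ n ≤ μ n - σ n * Real.sqrt (2 * Real.log n)) :
    Tendsto (fun n => P n {ω | Nat.card {i : Fin (n - 2) // D n i ω ≤ δ n} ≤ k - 1})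
      atTop (nhds 1) := by
  set t : ℕ → ℝ := fun n => Real.sqrt (2 * Real.log n) with ht_def
  have hlogpos : ∀ n : ℕ, 3 ≤ n → 0 < Real.log n := by
    intro n hn
    have h3 : (3:ℝ) ≤ (n:ℝ) := by exact_mod_cast hn
    exact Real.log_pos (by linarith)
  have htpos : ∀ n : ℕ, 3 ≤ n → 0 < t n := fun n hn =>
    Real.sqrt_pos.2 (by linarith [hlogpos n hn])
  set c : ℕ → ℝ := fun n => 1 / (t n * Real.sqrt (2*Real.pi)) with hc_def
  have hsqrtpi : (0:ℝ) < Real.sqrt (2*Real.pi) := Real.sqrt_pos.2 (by positivity)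
  -- per-variable bound
  have hbad : ∀ n : ℕ, 3 ≤ n →
      P n (⋃ i, {ω | D n i ω ≤ δ n}) ≤ ENNReal.ofReal (c n) := by
    intro n hn
    have htn := htpos n hn
    have hnpos : (0:ℝ) < (n:ℝ) := by
      have : (3:ℝ) ≤ (n:ℝ) := by exact_mod_cast hn
      linarith
    have hone : ∀ i, P n {ω | D n i ω ≤ δ n}
        ≤ ENNReal.ofReal ((n:ℝ)⁻¹ / (t n * Real.sqrt (2*Real.pi))) := by
      intro i
      have hae : AEMeasurable (D n i) (P n) := by
        by_contra h
        have h0 := Measure.map_of_not_aemeasurable h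
        rw [hdist n hn i] at h0
        have h1 : (gaussianReal (μ n) ⟨(σ n)^2, sq_nonneg _⟩) univ = 1 :=
          @measure_univ _ _ _ (instIsProbabilityMeasureGaussianReal _ _)
        rw [h0] at h1
        simp at h1
      have hset : {ω | D n i ω ≤ δ n} = D n i ⁻¹' Iic (δ n) := rfl
      rw [hset, ← Measure.map_apply_of_aemeasurable hae measurableSet_Iic, hdist n hn i]
      calc gaussianReal (μ n) ⟨(σ n)^2, sq_nonneg _⟩ (Iic (δ n))
          ≤ gaussianReal (μ n) ⟨(σ n)^2, sq_nonneg _⟩ (Iic (μ n - σ n * t n)) :=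
            measure_mono (Iic_subset_Iic.2 (hδ n hn))
        _ ≤ ENNReal.ofReal (Real.exp (-(t n)^2/2) / (t n * Real.sqrt (2*Real.pi))) :=
            gauss_tail _ _ _ (hσ n hn) htn
        _ = ENNReal.ofReal ((n:ℝ)⁻¹ / (t n * Real.sqrt (2*Real.pi))) := by
            congr 2
            rw [ht_def]
            rw [Real.sq_sqrt (by linarith [hlogpos n hn] : (0:ℝ) ≤ 2 * Real.log n)]
            rw [show -(2*Real.log n)/2 = -Real.log n by ring, Real.exp_neg,
              Real.exp_log hnpos]
    calc P n (⋃ i, {ω | D n i ω ≤ δ n}) ≤ ∑' i, P n {ω | D n i ω ≤ δ n} :=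
          measure_iUnion_le _
      _ ≤ ∑' (i : Fin (n-2)), ENNReal.ofReal ((n:ℝ)⁻¹ / (t n * Real.sqrt (2*Real.pi))) :=
          ENNReal.tsum_le_tsum hone
      _ = ((n-2 : ℕ) : ENNReal) * ENNReal.ofReal ((n:ℝ)⁻¹ / (t n * Real.sqrt (2*Real.pi))) := by
          rw [tsum_fintype]
          simp [Finset.sum_const, Fintype.card_fin, nsmul_eq_mul]
      _ ≤ ((n : ℕ) : ENNReal) * ENNReal.ofReal ((n:ℝ)⁻¹ / (t n * Real.sqrt (2*Real.pi))) :=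
          mul_le_mul_left (by exact_mod_cast Nat.cast_le.2 (Nat.sub_le n 2)) _
      _ = ENNReal.ofReal ((n:ℝ) * ((n:ℝ)⁻¹ / (t n * Real.sqrt (2*Real.pi)))) := by
          rw [ENNReal.ofReal_mul (by positivity), ENNReal.ofReal_natCast]
      _ = ENNReal.ofReal (c n) := by
          congr 1
          rw [hc_def]
          field_simp
  -- lower bound on the good event
  have hgood : ∀ n : ℕ, 3 ≤ n →
      1 - ENNReal.ofReal (c n)
        ≤ P n {ω | Nat.card {i : Fin (n - 2) // D n i ω ≤ δ n} ≤ k - 1} := by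
    intro n hn
    set B := ⋃ i, {ω : Ω n | D n i ω ≤ δ n} with hB
    have hsub : Bᶜ ⊆ {ω | Nat.card {i : Fin (n - 2) // D n i ω ≤ δ n} ≤ k - 1} := by
      intro ω hω
      simp only [hB, mem_compl_iff, mem_iUnion, not_exists, mem_setOf_eq] at hω
      have hemp : IsEmpty {i : Fin (n-2) // D n i ω ≤ δ n} :=
        ⟨fun x => hω x.1 x.2⟩
      simp only [mem_setOf_eq, Nat.card_of_isEmpty]
      exact Nat.zero_le _
    calc 1 - ENNReal.ofReal (c n) ≤ 1 - P n B :=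
          tsub_le_tsub_left (hbad n hn) 1
      _ ≤ P n Bᶜ := by
          rw [tsub_le_iff_left]
          calc (1:ENNReal) = P n univ := measure_univ.symm
            _ = P n (B ∪ Bᶜ) := by rw [union_compl_self]
            _ ≤ P n B + P n Bᶜ := measure_union_le _ _
      _ ≤ _ := measure_mono hsub
  -- limit of the lower bound
  have hc0 : Tendsto c atTop (nhds 0) := by
    have hsqrt_top : Tendsto Real.sqrt atTop atTop := by
      refine tendsto_atTop_atTop.2 fun b => ⟨b^2, fun a ha => ?_⟩
      calc b ≤ |b| := le_abs_self b
        _ = Real.sqrt (b^2) := (Real.sqrt_sq_eq_abs b).symm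
        _ ≤ Real.sqrt a := Real.sqrt_le_sqrt ha
    have hlog_top : Tendsto (fun n : ℕ => Real.log n) atTop atTop :=
      Real.tendsto_log_atTop.comp tendsto_natCast_atTop_atTop
    have h2log : Tendsto (fun n : ℕ => 2 * Real.log n) atTop atTop :=
      hlog_top.const_mul_atTop (by norm_num)
    have ht_top : Tendsto t atTop atTop := hsqrt_top.comp h2log
    have hden : Tendsto (fun n : ℕ => t n * Real.sqrt (2*Real.pi)) atTop atTop :=
      ht_top.atTop_mul_const hsqrtpi
    have := tendsto_inv_atTop_zero.comp hden
    refine this.congr fun n => ?_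
    simp [hc_def, Function.comp, one_div]
  have hlow : Tendsto (fun n => 1 - ENNReal.ofReal (c n)) atTop (nhds 1) := by
    have h1 : Tendsto (fun n => ENNReal.ofReal (c n)) atTop (nhds 0) := by
      have := (ENNReal.continuous_ofReal.tendsto 0).comp hc0
      simpa [Function.comp_def] using this
    have := ENNReal.Tendsto.sub (tendsto_const_nhds (x := (1:ENNReal))) h1
      (Or.inl ENNReal.one_ne_top)
    simpa using this
  refine tendsto_of_tendsto_of_tendsto_of_le_of_le' hlow tendsto_const_nhds ?_ ?_
  · filter_upwards [eventually_ge_atTop 3] with n hn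
    exact hgood n hn
  · filter_upwards with n
    exact prob_le_one
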